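/- arXiv:2207.07747 — 5 statements merged into one kernel-verified Lean document; each statement's English description precedes it below -/
import Mathlib

section
/- Let D ≥ 3, let β, γ ∈ ℝ, and let θ₀,…,θ_D be real numbers satisfying θ_{i-1} - βθ_i + θ_{i+1} = γ for 1 ≤ i ≤ D-1. Then there exists ϱ ∈ ℝ such that θ_{i-1}² - βθ_{i-1}θ_i + θ_i² - γ(θ_{i-1} + θ_i) = ϱ for all 1 ≤ i ≤ D. -/
theorem stmt_2 (D : ℕ) (hD : 3 ≤ D) (β γ : ℝ) (θ : ℕ → ℝ)
    (hrec : ∀ i, 1 ≤ i → i ≤ D - 1 → θ (i - 1) - β * θ i + θ (i + 1) = γ) :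
    ∃ ϱ : ℝ, ∀ i, 1 ≤ i → i ≤ D →
      θ (i - 1) ^ 2 - β * θ (i - 1) * θ i + θ i ^ 2 - γ * (θ (i - 1) + θ i) = ϱ := by
  set f : ℕ → ℝ := fun i =>
    θ (i - 1) ^ 2 - β * θ (i - 1) * θ i + θ i ^ 2 - γ * (θ (i - 1) + θ i) with hf
  refine ⟨f 1, ?_⟩
  intro i hi hiD
  induction i with
  | zero => omega
  | succ k ih =>
    rcases Nat.eq_or_lt_of_le hi with h1 | h1
    · rw [← h1]
    · have hk1 : 1 ≤ k := by omega
      have hkD : k ≤ D - 1 := by omega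
      have hr := hrec k hk1 hkD
      have hstep : f (k + 1) = f k := by
        simp only [hf, Nat.add_sub_cancel]
        have hkm : k - 1 + 1 = k := by omega
        have : θ (k + 1) = γ - θ (k - 1) + β * θ k := by linarith
        rw [this]; ring_nf
      show f (k + 1) = f 1
      rw [hstep]
      exact ih hk1 (by omega)
end

section
/- Let Γ be a distance-regular graph with diameter D ≥ 3 and Krein parameters q^h_{i,j} defined by E_i ∘ E_j = |X|⁻¹ Σ_h q^h_{i,j} E_h, where ∘ is entrywise multiplication. Then q^h_{i,j} ≥ 0 for all 0 ≤ h, i, j ≤ D. -/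
open Matrix Finset

private lemma dist_start_getVert_le {X : Type} {G : SimpleGraph X} (hconn : G.Connected)
    {u v : X} (p : G.Walk u v) (i : ℕ) : G.dist u (p.getVert i) ≤ i := by
  induction p generalizing i with
  | nil => simp [SimpleGraph.Walk.getVert, SimpleGraph.dist_self]
  | @cons a b c h q ih =>
    cases i with
    | zero => simp
    | succ i =>
      have h1 : G.dist a b = 1 := SimpleGraph.dist_eq_one_iff_adj.mpr h
      calc G.dist a ((SimpleGraph.Walk.cons h q).getVert (i+1))
          ≤ G.dist a b + G.dist b (q.getVert i) :=
            hconn.dist_triangle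
        _ ≤ 1 + i := by rw [h1]; exact Nat.add_le_add_left (ih i) 1
        _ = i + 1 := by omega

private lemma dist_getVert_end_le {X : Type} {G : SimpleGraph X} (hconn : G.Connected)
    {u v : X} (p : G.Walk u v) (i : ℕ) : G.dist (p.getVert i) v ≤ p.length - i := by
  induction p generalizing i with
  | nil => simp [SimpleGraph.Walk.getVert, SimpleGraph.dist_self]
  | @cons a b c h q ih =>
    cases i with
    | zero =>
      have h1 : G.dist a b = 1 := SimpleGraph.dist_eq_one_iff_adj.mpr h
      calc G.dist ((SimpleGraph.Walk.cons h q).getVert 0) c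
          ≤ G.dist a b + G.dist b c := by
            simpa using hconn.dist_triangle (u := a) (v := b) (w := c)
        _ ≤ 1 + q.length := by
            rw [h1]; exact Nat.add_le_add_left (SimpleGraph.dist_le q) 1
        _ ≤ (SimpleGraph.Walk.cons h q).length - 0 := by simp; omega
    | succ i =>
      calc G.dist ((SimpleGraph.Walk.cons h q).getVert (i+1)) c
          = G.dist (q.getVert i) c := rfl
        _ ≤ q.length - i := ih i
        _ ≤ (SimpleGraph.Walk.cons h q).length - (i+1) := by simp

private lemma my_exists_dist_eq {X : Type} {G : SimpleGraph X} (hconn : G.Connected)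
    {y z : X} {D : ℕ} (hyz : G.dist y z = D) {l : ℕ} (hl : l ≤ D) :
    ∃ w : X, G.dist y w = l := by
  obtain ⟨p, hp⟩ := (hconn y z).exists_walk_length_eq_dist
  refine ⟨p.getVert l, ?_⟩
  have h1 := dist_start_getVert_le hconn p l
  have h2 := dist_getVert_end_le hconn p l
  have h3 : G.dist y z ≤ G.dist y (p.getVert l) + G.dist (p.getVert l) z :=
    hconn.dist_triangle
  rw [hp, hyz] at h2
  omega

private lemma reorder5 {X : Type} [Fintype X] (f : X → X → X → X → X → ℝ) :
    (∑ x : X, ∑ y : X, ∑ a : X, ∑ b : X, ∑ c : X, f x y a b c)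
  = ∑ a : X, ∑ b : X, ∑ c : X, ∑ x : X, ∑ y : X, f x y a b c := by
  conv_lhs => enter [2, x]; rw [Finset.sum_comm]
  rw [Finset.sum_comm]
  conv_lhs => enter [2, a, 2, x]; rw [Finset.sum_comm]
  conv_lhs => enter [2, a]; rw [Finset.sum_comm]
  conv_lhs => enter [2, a, 2, b, 2, x]; rw [Finset.sum_comm]
  conv_lhs => enter [2, a, 2, b]; rw [Finset.sum_comm]

private lemma schur_trace {X : Type} [Fintype X] (M N P : Matrix X X ℝ)
    (hM : M = Mᵀ * M) (hN : N = Nᵀ * N) (hP : P = Pᵀ * P) :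
    0 ≤ ((M.hadamard N) * P).trace := by
  have hM' : ∀ x y, M x y = ∑ a : X, M a x * M a y := by
    intro x y; conv_lhs => rw [hM]
    simp [Matrix.mul_apply, Matrix.transpose_apply]
  have hN' : ∀ x y, N x y = ∑ a : X, N a x * N a y := by
    intro x y; conv_lhs => rw [hN]
    simp [Matrix.mul_apply, Matrix.transpose_apply]
  have hP' : ∀ x y, P x y = ∑ a : X, P a x * P a y := by
    intro x y; conv_lhs => rw [hP]
    simp [Matrix.mul_apply, Matrix.transpose_apply]
  have key : ((M.hadamard N) * P).trace
      = ∑ a : X, ∑ b : X, ∑ c : X, (∑ x : X, M c x * N b x * P a x)^2 := by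
    calc ((M.hadamard N) * P).trace
        = ∑ x : X, ∑ y : X, (M x y * N x y) * P y x := by
          simp [Matrix.trace, Matrix.mul_apply, Matrix.hadamard_apply, Matrix.diag]
      _ = ∑ x : X, ∑ y : X, ∑ a : X, ∑ b : X, ∑ c : X,
            (M c x * N b x * P a x) * (M c y * N b y * P a y) := by
          refine Finset.sum_congr rfl fun x _ => Finset.sum_congr rfl fun y _ => ?_
          rw [hM' x y, hN' x y, hP' y x]
          simp only [Finset.sum_mul, Finset.mul_sum]
          refine Finset.sum_congr rfl fun a _ => Finset.sum_congr rfl fun b _ =>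
            Finset.sum_congr rfl fun c _ => by ring
      _ = ∑ a : X, ∑ b : X, ∑ c : X, ∑ x : X, ∑ y : X,
            (M c x * N b x * P a x) * (M c y * N b y * P a y) :=
          reorder5 _
      _ = ∑ a : X, ∑ b : X, ∑ c : X, (∑ x : X, M c x * N b x * P a x)^2 := by
          refine Finset.sum_congr rfl fun a _ => Finset.sum_congr rfl fun b _ =>
            Finset.sum_congr rfl fun c _ => ?_
          rw [sq, Finset.sum_mul_sum]
  rw [key]
  positivity

set_option maxHeartbeats 1000000 in
theorem stmt_16 (X : Type) [Fintype X] [DecidableEq X]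
    (G : SimpleGraph X) (hconn : G.Connected)
    (D : ℕ) (hD : 3 ≤ D)
    (hdiam : ∀ y z : X, G.dist y z ≤ D)
    (hdiam' : ∃ y z : X, G.dist y z = D)
    (p : ℕ → ℕ → ℕ → ℕ)
    (hp : ∀ h i j, h ≤ D → i ≤ D → j ≤ D → ∀ y z : X, G.dist y z = h →
      (Finset.univ.filter fun w => G.dist y w = i ∧ G.dist z w = j).card = p h i j)
    (A : ℕ → Matrix X X ℝ)
    (hA : ∀ i, A i = Matrix.of fun y z => if G.dist y z = i then (1 : ℝ) else 0)
    (E : ℕ → Matrix X X ℝ)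
    (hEsymm : ∀ i ≤ D, (E i)ᵀ = E i)
    (hEmul : ∀ i ≤ D, ∀ j ≤ D, E i * E j = if i = j then E i else 0)
    (hEsum : ∑ i ∈ Finset.range (D + 1), E i = 1)
    (hE0 : E 0 = ((Fintype.card X : ℝ))⁻¹ • Matrix.of (fun _ _ => (1 : ℝ)))
    (hEspan : ∀ i ≤ D, E i ∈ Submodule.span ℝ {B : Matrix X X ℝ | ∃ l ≤ D, B = A l})
    (hAspan : ∀ i ≤ D, A i ∈ Submodule.span ℝ {B : Matrix X X ℝ | ∃ l ≤ D, B = E l})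
    (q : ℕ → ℕ → ℕ → ℝ)
    (hq : ∀ i ≤ D, ∀ j ≤ D, Matrix.hadamard (E i) (E j) =
      ((Fintype.card X : ℝ))⁻¹ • ∑ h ∈ Finset.range (D + 1), q h i j • E h) :
    ∀ h ≤ D, ∀ i ≤ D, ∀ j ≤ D, 0 ≤ q h i j := by
  obtain ⟨y0, z0, hyz0⟩ := hdiam'
  haveI : Nonempty X := ⟨y0⟩
  have hcard : (0:ℝ) < (Fintype.card X : ℝ) := by
    exact_mod_cast Fintype.card_pos
  -- each E k is a symmetric idempotent
  have hEsq : ∀ k ≤ D, E k = (E k)ᵀ * (E k) := by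
    intro k hk
    rw [hEsymm k hk, hEmul k hk k hk, if_pos rfl]
  -- linear independence of the distance matrices
  have hli : LinearIndependent ℝ (fun l : Fin (D+1) => A (l : ℕ)) := by
    rw [Fintype.linearIndependent_iff]
    intro g hg l
    obtain ⟨w, hw⟩ := my_exists_dist_eq hconn hyz0 (Nat.lt_succ_iff.mp l.isLt)
    have hg' := congrFun (congrFun hg y0) w
    simp only [Finset.sum_apply, Matrix.sum_apply, Matrix.smul_apply, hA,
      Matrix.of_apply, smul_eq_mul, Matrix.zero_apply, hw] at hg'
    rw [Finset.sum_eq_single l] at hg'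
    · simpa using hg'
    · intro l' _ hl'
      have : ¬ ((l : ℕ) = (l' : ℕ)) := fun hc => hl' (Fin.ext hc.symm)
      simp [this]
    · intro hl; exact absurd (Finset.mem_univ l) hl
  -- every E k is nonzero
  have hEne : ∀ k ≤ D, E k ≠ 0 := by
    intro k hk hk0
    set S := Submodule.span ℝ {B : Matrix X X ℝ | ∃ l ≤ D, B = E l} with hS
    have hAmem : ∀ l : Fin (D+1), A (l : ℕ) ∈ S :=
      fun l => hAspan (l : ℕ) (Nat.lt_succ_iff.mp l.isLt)
    have hli' : LinearIndependent ℝ (fun l : Fin (D+1) => (⟨A (l : ℕ), hAmem l⟩ : S)) :=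
      hli.of_comp S.subtype
    have h1 : D + 1 ≤ Module.finrank ℝ S := by
      simpa using hli'.fintype_card_le_finrank
    have hsub : {B : Matrix X X ℝ | ∃ l ≤ D, B = E l} ⊆
        insert (0 : Matrix X X ℝ)
          (Set.range (fun m : Fin D => E (if (m : ℕ) < k then (m : ℕ) else (m : ℕ) + 1))) := by
      rintro B ⟨l, hl, rfl⟩
      by_cases hlk : l = k
      · subst hlk
        exact Set.mem_insert_iff.mpr (Or.inl hk0)
      · refine Set.mem_insert_iff.mpr (Or.inr ?_)
        by_cases hlt : l < k
        · exact ⟨⟨l, by omega⟩, by simp [hlt]⟩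
        · have hl1 : l - 1 + 1 = l := by omega
          refine ⟨⟨l - 1, by omega⟩, ?_⟩
          show E (if (l - 1 : ℕ) < k then (l - 1 : ℕ) else (l - 1 : ℕ) + 1) = E l
          rw [if_neg (by omega : ¬ (l - 1 : ℕ) < k), hl1]
    have h2 : Module.finrank ℝ S ≤ D := by
      have hle : S ≤ Submodule.span ℝ
          (Set.range (fun m : Fin D => E (if (m : ℕ) < k then (m : ℕ) else (m : ℕ) + 1))) := by
        rw [hS]
        refine le_trans (Submodule.span_mono hsub) ?_
        rw [Submodule.span_insert_zero]
      calc Module.finrank ℝ S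
          ≤ Module.finrank ℝ (Submodule.span ℝ
              (Set.range (fun m : Fin D => E (if (m : ℕ) < k then (m : ℕ) else (m : ℕ) + 1)))) :=
            Submodule.finrank_mono hle
        _ ≤ Fintype.card (Fin D) := finrank_range_le_card _
        _ = D := Fintype.card_fin D
    omega
  -- trace of each E k is positive
  have htr : ∀ k ≤ D, 0 < (E k).trace := by
    intro k hk
    have hsq : (E k).trace = ∑ x : X, ∑ y : X, (E k) y x ^ 2 := by
      conv_lhs => rw [hEsq k hk]
      simp [Matrix.trace, Matrix.mul_apply, Matrix.diag, Matrix.transpose_apply, sq]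
    have hne := hEne k hk
    have hex : ∃ y x, (E k) y x ≠ 0 := by
      by_contra hcon
      push_neg at hcon
      exact hne (by ext y x; simp [hcon y x])
    obtain ⟨y1, x1, hval⟩ := hex
    rw [hsq]
    refine Finset.sum_pos' (fun x _ => Finset.sum_nonneg fun y _ => sq_nonneg _)
      ⟨x1, Finset.mem_univ _, Finset.sum_pos' (fun y _ => sq_nonneg _)
        ⟨y1, Finset.mem_univ _, by positivity⟩⟩
  -- main argument
  intro h hh i hi j hj
  have hmulEh : Matrix.hadamard (E i) (E j) * E h
      = ((Fintype.card X : ℝ))⁻¹ • (q h i j • E h) := by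
    rw [hq i hi j hj, Matrix.smul_mul, Finset.sum_mul]
    congr 1
    calc ∑ h' ∈ Finset.range (D+1), q h' i j • E h' * E h
        = ∑ h' ∈ Finset.range (D+1), (if h' = h then q h' i j • E h' else 0) := by
          refine Finset.sum_congr rfl fun h' hh' => ?_
          rw [Matrix.smul_mul, hEmul h' (by simpa [Nat.lt_succ_iff] using hh') h hh]
          split_ifs with hcase <;> simp
      _ = q h i j • E h := by
          rw [Finset.sum_ite_eq' (Finset.range (D+1)) h]
          rw [if_pos (Finset.mem_range.mpr (by omega))]
  have htrace : ((Matrix.hadamard (E i) (E j)) * E h).trace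
      = ((Fintype.card X : ℝ))⁻¹ * (q h i j * (E h).trace) := by
    rw [hmulEh, Matrix.trace_smul, Matrix.trace_smul]
    simp [smul_eq_mul]
  have hnn := schur_trace (E i) (E j) (E h) (hEsq i hi) (hEsq j hj) (hEsq h hh)
  rw [htrace] at hnn
  have hc : (0:ℝ) < ((Fintype.card X : ℝ))⁻¹ := by positivity
  have ht := htr h hh
  by_contra hq0
  push_neg at hq0
  have hlt : q h i j * (E h).trace < 0 := mul_neg_of_neg_of_pos hq0 ht
  have hfin : ((Fintype.card X : ℝ))⁻¹ * (q h i j * (E h).trace) < 0 :=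
    mul_neg_of_pos_of_neg hc hlt
  linarith
end

section
/- Let V be a nonzero finite-dimensional vector space over a field F, and let A : V → V be diagonalizable with all eigenspaces of dimension one. If B : V → V is a linear map commuting with A, then B is a polynomial in A. -/
theorem stmt_17 (F : Type) [Field F] (V : Type) [AddCommGroup V] [Module F V]
    [FiniteDimensional F V] [Nontrivial V]
    (A B : Module.End F V)
    (hdiag : (⨆ μ : F, Module.End.eigenspace A μ) = ⊤)
    (hone : ∀ μ : F, Module.End.HasEigenvalue A μ →
      Module.finrank F (Module.End.eigenspace A μ) = 1)
    (hcomm : A * B = B * A) :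
    ∃ f : Polynomial F, B = Polynomial.aeval A f := by
  classical
  have hmap : ∀ μ : F, ∀ x ∈ Module.End.eigenspace A μ,
      B x ∈ Module.End.eigenspace A μ := fun μ x hx =>
    Module.End.mapsTo_genEigenspace_of_comm (f := A) (g := B) hcomm μ 1 hx
  -- On each eigenspace, B acts as a scalar
  have key : ∀ μ : F, ∃ c : F, ∀ x ∈ Module.End.eigenspace A μ, B x = c • x := by
    intro μ
    by_cases h : Module.End.HasEigenvalue A μ
    · obtain ⟨v, hv0, hv⟩ := (finrank_eq_one_iff'
        (K := F) (V := Module.End.eigenspace A μ)).mp (hone μ h)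
      obtain ⟨c, hc⟩ := hv ⟨B (v : V), hmap μ v v.2⟩
      have hc' : c • (v : V) = B (v : V) := congrArg Subtype.val hc
      refine ⟨c, fun x hx => ?_⟩
      obtain ⟨a, ha⟩ := hv ⟨x, hx⟩
      have ha' : a • (v : V) = x := congrArg Subtype.val ha
      rw [← ha', map_smul, ← hc', smul_comm]
    · refine ⟨0, fun x hx => ?_⟩
      rw [Module.End.hasEigenvalue_iff, not_not] at h
      rw [h, Submodule.mem_bot] at hx
      simp [hx]
  choose c hc using key
  -- The set of eigenvalues is finite
  have hint : IsIntegral F A := Algebra.IsIntegral.isIntegral A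
  have hfin : Set.Finite {μ : F | Module.End.HasEigenvalue A μ} :=
    Set.Finite.subset (Polynomial.finite_setOf_isRoot (minpoly.ne_zero hint))
      fun μ hμ => Module.End.isRoot_of_hasEigenvalue hμ
  set E : Finset F := hfin.toFinset with hE
  set f : Polynomial F := Lagrange.interpolate E id c with hf
  refine ⟨f, ?_⟩
  ext x
  have hx : x ∈ ⨆ μ : F, Module.End.eigenspace A μ := hdiag ▸ Submodule.mem_top
  refine Submodule.iSup_induction (motive := fun y => B y = Polynomial.aeval A f y)
    (fun μ : F => Module.End.eigenspace A μ) hx ?_ (by simp) ?_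
  · intro μ y hy
    by_cases hy0 : y = 0
    · simp [hy0]
    · have hev : Module.End.HasEigenvalue A μ :=
        Module.End.hasEigenvalue_of_hasEigenvector ⟨hy, hy0⟩
      have hμE : μ ∈ E := by rw [hE, Set.Finite.mem_toFinset]; exact hev
      rw [Module.End.aeval_apply_of_hasEigenvector ⟨hy, hy0⟩, hc μ y hy]
      exact congrArg (· • y)
        (Lagrange.eval_interpolate_at_node c (Set.injOn_id _) hμE).symm
  · intro y z hy hz
    simp [map_add, hy, hz]
end

section
/- Let Γ be a distance-regular graph with diameter D ≥ 3, fix x ∈ X, and let A* and the dual eigenvalues θ*₀,…,θ*_D be given, with Q-polynomial ordering, so that A* = Σ_i θ*_i E*_i. Then for 0 ≤ i, j, r, s ≤ D: E*_i A^r A* A^s E*_j equals θ*_{j+s} E*_i A^{r+s} E*_j if r+s = i-j, equals θ*_{j-s} E*_i A^{r+s} E*_j if r+s = j-i, and equals 0 if r+s < |i-j|. -/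
open Matrix Finset

lemma aux_pow_entry {X : Type} [Fintype X] [DecidableEq X]
    (G : SimpleGraph X) (hconn : G.Connected) (P : Matrix X X ℝ)
    (hP : P = Matrix.of fun y z => if G.dist y z = 1 then (1 : ℝ) else 0) :
    ∀ r (y w : X), 0 ≤ (P ^ r) y w ∧ ((P ^ r) y w ≠ 0 → G.dist y w ≤ r) := by
  intro r
  induction r with
  | zero =>
    intro y w
    simp only [pow_zero, Matrix.one_apply]
    constructor
    · split <;> norm_num
    · intro h
      split at h
      · subst ‹y = w›; simp
      · simp at h
  | succ r ih =>
    intro y w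
    have hsum : (P ^ (r + 1)) y w = ∑ v, (P ^ r) y v * P v w := by
      rw [pow_succ, Matrix.mul_apply]
    constructor
    · rw [hsum]
      apply Finset.sum_nonneg
      intro v _
      have h1 := (ih y v).1
      have h2 : 0 ≤ P v w := by rw [hP]; simp only [Matrix.of_apply]; split <;> norm_num
      exact mul_nonneg h1 h2
    · intro h
      rw [hsum] at h
      obtain ⟨v, -, hv⟩ := Finset.exists_ne_zero_of_sum_ne_zero h
      have h1 : (P ^ r) y v ≠ 0 := fun hc => hv (by simp [hc])
      have h2 : P v w ≠ 0 := fun hc => hv (by simp [hc])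
      have hd1 := (ih y v).2 h1
      have hd2 : G.dist v w ≤ 1 := by
        rw [hP] at h2; simp only [Matrix.of_apply] at h2
        by_cases hdw : G.dist v w = 1
        · omega
        · simp [hdw] at h2
      calc G.dist y w ≤ G.dist y v + G.dist v w := hconn.dist_triangle
        _ ≤ r + 1 := by omega

theorem stmt_18 (X : Type) [Fintype X] [DecidableEq X]
    (G : SimpleGraph X) (hconn : G.Connected)
    (D : ℕ) (hD : 3 ≤ D)
    (hdiam : ∀ y z : X, G.dist y z ≤ D)
    (hdiam' : ∃ y z : X, G.dist y z = D)
    (p : ℕ → ℕ → ℕ → ℕ)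
    (hp : ∀ h i j, h ≤ D → i ≤ D → j ≤ D → ∀ y z : X, G.dist y z = h →
      (Finset.univ.filter fun w => G.dist y w = i ∧ G.dist z w = j).card = p h i j)
    (A : ℕ → Matrix X X ℝ)
    (hA : ∀ i, A i = Matrix.of fun y z => if G.dist y z = i then (1 : ℝ) else 0)
    (x : X) (Estar : ℕ → Matrix X X ℝ)
    (hEstar : ∀ i, Estar i =
      Matrix.diagonal (fun y => if G.dist x y = i then (1 : ℝ) else 0))
    (θs : ℕ → ℝ)
    (hdist : ∀ h ≤ D, ∀ h' ≤ D, h ≠ h' → θs h ≠ θs h')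
    (Astar : Matrix X X ℝ)
    (hAstar : Astar = ∑ h ∈ Finset.range (D + 1), θs h • Estar h) :
    ∀ i ≤ D, ∀ j ≤ D, ∀ r ≤ D, ∀ s ≤ D,
      (((r : ℤ) + s = (i : ℤ) - j →
        Estar i * (A 1) ^ r * Astar * (A 1) ^ s * Estar j =
          θs (j + s) • (Estar i * (A 1) ^ (r + s) * Estar j)) ∧
      ((r : ℤ) + s = (j : ℤ) - i →
        Estar i * (A 1) ^ r * Astar * (A 1) ^ s * Estar j =
          θs (j - s) • (Estar i * (A 1) ^ (r + s) * Estar j)) ∧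
      ((r : ℤ) + s < |(i : ℤ) - (j : ℤ)| →
        Estar i * (A 1) ^ r * Astar * (A 1) ^ s * Estar j = 0)) := by
  intro i hi j hj r hr s hs
  set P := A 1 with hPdef
  have hP : P = Matrix.of fun y z => if G.dist y z = 1 then (1 : ℝ) else 0 := hA 1
  have key := aux_pow_entry G hconn P hP
  -- Astar is diagonal with entry θs (dist x w)
  have hAstar' : Astar = Matrix.diagonal (fun w => θs (G.dist x w)) := by
    rw [hAstar]
    ext y z
    simp only [Matrix.sum_apply, Matrix.smul_apply, hEstar, Matrix.diagonal_apply]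
    by_cases hyz : y = z
    · subst hyz
      simp only [if_pos rfl, smul_eq_mul, mul_ite, mul_one, mul_zero, if_true]
      rw [Finset.sum_ite_eq (Finset.range (D+1)) (G.dist x y) θs]
      simp [Nat.lt_succ_iff.mpr (hdiam x y)]
    · simp [hyz]
  -- entrywise formula for LHS
  have hLHS : ∀ y z, (Estar i * P ^ r * Astar * P ^ s * Estar j) y z =
      (if G.dist x y = i then (1:ℝ) else 0) * (if G.dist x z = j then (1:ℝ) else 0) *
        ∑ w, (P ^ r) y w * θs (G.dist x w) * (P ^ s) w z := by
    intro y z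
    rw [hEstar i, hEstar j, hAstar']
    rw [Matrix.mul_assoc, Matrix.mul_assoc, Matrix.mul_assoc]
    rw [Matrix.diagonal_mul]
    rw [show (P ^ r * (Matrix.diagonal (fun w => θs (G.dist x w)) * (P ^ s *
        Matrix.diagonal fun y => if G.dist x y = j then (1:ℝ) else 0))) =
      (P ^ r * Matrix.diagonal (fun w => θs (G.dist x w)) * P ^ s) *
        Matrix.diagonal (fun y => if G.dist x y = j then (1:ℝ) else 0) by
      rw [Matrix.mul_assoc, Matrix.mul_assoc]]
    rw [Matrix.mul_diagonal, Matrix.mul_apply]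
    rw [Finset.mul_sum, Finset.sum_mul, Finset.mul_sum]
    congr 1
    ext w
    rw [Matrix.mul_diagonal]
    ring
  have hRHS : ∀ t y z, (t • (Estar i * P ^ (r + s) * Estar j)) y z =
      (if G.dist x y = i then (1:ℝ) else 0) * (if G.dist x z = j then (1:ℝ) else 0) *
        ∑ w, t * ((P ^ r) y w * (P ^ s) w z) := by
    intro t y z
    rw [Matrix.smul_apply, hEstar i, hEstar j, pow_add, Matrix.mul_assoc,
        Matrix.diagonal_mul, Matrix.mul_diagonal, Matrix.mul_apply]
    simp only [smul_eq_mul, Finset.mul_sum, Finset.sum_mul]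
    exact Finset.sum_congr rfl fun w _ => by ring
  -- key distance fact for each w in noncancelled terms
  have hw_dist : ∀ y z w, G.dist x y = i → G.dist x z = j →
      (P ^ r) y w * (P ^ s) w z ≠ 0 →
      i ≤ G.dist x w + r ∧ G.dist x w ≤ j + s ∧ j ≤ G.dist x w + s ∧ G.dist x w ≤ i + r := by
    intro y z w hy hz hne
    have h1 : (P ^ r) y w ≠ 0 := fun hc => hne (by simp [hc])
    have h2 : (P ^ s) w z ≠ 0 := fun hc => hne (by simp [hc])
    have d1 := (key r y w).2 h1
    have d2 := (key s w z).2 h2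
    have t1 : G.dist x y ≤ G.dist x w + G.dist w y := hconn.dist_triangle
    have t2 : G.dist x w ≤ G.dist x z + G.dist z w := hconn.dist_triangle
    have t3 : G.dist x z ≤ G.dist x w + G.dist w z := hconn.dist_triangle
    have t4 : G.dist x w ≤ G.dist x y + G.dist y w := hconn.dist_triangle
    have c1 : G.dist w y = G.dist y w := SimpleGraph.dist_comm
    have c2 : G.dist w z = G.dist z w := SimpleGraph.dist_comm
    omega
  refine ⟨?_, ?_, ?_⟩
  · intro hcase
    have hieq : i = j + s + r := by omega
    ext y z
    rw [hLHS y z, hRHS (θs (j + s)) y z]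
    by_cases hy : G.dist x y = i
    · by_cases hz : G.dist x z = j
      · congr 1
        apply Finset.sum_congr rfl
        intro w _
        by_cases hne : (P ^ r) y w * (P ^ s) w z = 0
        · rcases mul_eq_zero.mp hne with h | h <;> simp [h]
        · have := hw_dist y z w hy hz hne
          have : G.dist x w = j + s := by omega
          rw [this]; ring
      · simp [hz]
    · simp [hy]
  · intro hcase
    have hjeq : j = i + r + s := by omega
    ext y z
    rw [hLHS y z, hRHS (θs (j - s)) y z]
    by_cases hy : G.dist x y = i
    · by_cases hz : G.dist x z = j
      · congr 1
        apply Finset.sum_congr rfl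
        intro w _
        by_cases hne : (P ^ r) y w * (P ^ s) w z = 0
        · rcases mul_eq_zero.mp hne with h | h <;> simp [h]
        · have := hw_dist y z w hy hz hne
          have hdw : G.dist x w = j - s := by omega
          rw [hdw]; ring
      · simp [hz]
    · simp [hy]
  · intro hcase
    ext y z
    rw [hLHS y z]
    simp only [Matrix.zero_apply]
    by_cases hy : G.dist x y = i
    · by_cases hz : G.dist x z = j
      · have hsum : ∑ w, (P ^ r) y w * θs (G.dist x w) * (P ^ s) w z = 0 := by
          apply Finset.sum_eq_zero
          intro w _
          by_cases hne : (P ^ r) y w * (P ^ s) w z = 0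
          · rcases mul_eq_zero.mp hne with h | h <;> simp [h]
          · exfalso
            have := hw_dist y z w hy hz hne
            rcases abs_cases ((i:ℤ) - (j:ℤ)) with ⟨h1, -⟩ | ⟨h1, -⟩ <;>
              rw [h1] at hcase <;> omega
        rw [hsum]; ring
      · simp [hz]
    · simp [hy]
end

section
/- Let Γ be a distance-regular graph with diameter D ≥ 3 having classical parameters (D, b, α, σ). Then θ = b₁/b - 1 is an eigenvalue of Γ, where b₁ is the intersection number; specifically, the sequence σ_i = 1 + (θ/k - 1)·[i choose 1]_b · b^{1-i} (0 ≤ i ≤ D) satisfies σ₀ = 1, σ₁ = θ/k, c_iσ_{i-1} + a_iσ_i + b_iσ_{i+1} = θσ_i for 1 ≤ i ≤ D-1, and c_Dσ_{D-1} + a_Dσ_D = θσ_D. -/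
open Matrix Finset

private lemma aux_dist_getVert_le {X : Type} (G : SimpleGraph X) (hconn : G.Connected)
    {y z : X} (pw : G.Walk y z) : ∀ i : ℕ, G.dist y (pw.getVert i) ≤ i := by
  intro i
  induction i with
  | zero => simp [pw.getVert_zero]
  | succ n ih =>
    by_cases h : n < pw.length
    · have hadj := pw.adj_getVert_succ h
      have htri := hconn.dist_triangle (u := y) (v := pw.getVert n) (w := pw.getVert (n+1))
      have hle : G.dist (pw.getVert n) (pw.getVert (n+1)) ≤ 1 := by
        have := SimpleGraph.dist_le (SimpleGraph.Walk.cons hadj SimpleGraph.Walk.nil)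
        simpa using this
      omega
    · have h1 : pw.getVert (n+1) = z := pw.getVert_of_length_le (by omega)
      have h2 : pw.getVert n = z := pw.getVert_of_length_le (by omega)
      rw [h1, ← h2]
      omega

private lemma aux_exists_dist {X : Type} (G : SimpleGraph X) (hconn : G.Connected)
    {y z : X} {D : ℕ} (hyz : G.dist y z = D) (i : ℕ) (hi : i ≤ D) :
    ∃ w : X, G.dist y w = i := by
  obtain ⟨pw, hpw⟩ := hconn.exists_walk_length_eq_dist y z
  refine ⟨pw.getVert i, ?_⟩
  have hlen : pw.length = D := by rw [hpw, hyz]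
  have h1 : G.dist y (pw.getVert i) ≤ i := aux_dist_getVert_le G hconn pw i
  have h2 : G.dist (pw.getVert i) z ≤ D - i := by
    have h3 := aux_dist_getVert_le G hconn pw.reverse (D - i)
    rw [SimpleGraph.Walk.getVert_reverse, hlen] at h3
    have he : D - (D - i) = i := by omega
    rw [he] at h3
    rwa [SimpleGraph.dist_comm]
  have h3 : D ≤ G.dist y (pw.getVert i) + G.dist (pw.getVert i) z :=
    hyz ▸ hconn.dist_triangle
  omega

private lemma aux_split {X : Type} [Fintype X] [DecidableEq X] (G : SimpleGraph X)
    (hconn : G.Connected) (y z : X) (i : ℕ) (hi : 1 ≤ i) (hyz : G.dist y z = i) :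
    (univ.filter fun w => G.dist y w = 1) =
      ((univ.filter fun w => G.dist y w = 1 ∧ G.dist z w = i-1) ∪
        (univ.filter fun w => G.dist y w = 1 ∧ G.dist z w = i)) ∪
        (univ.filter fun w => G.dist y w = 1 ∧ G.dist z w = i+1) := by
  ext w
  simp only [mem_filter, mem_union, mem_univ, true_and]
  constructor
  · intro hw
    have t1 := hconn.dist_triangle (u := z) (v := y) (w := w)
    have t2 := hconn.dist_triangle (u := y) (v := w) (w := z)
    rw [SimpleGraph.dist_comm (u := z) (v := y)] at t1
    rw [SimpleGraph.dist_comm (u := w) (v := z)] at t2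
    rw [hyz] at t1 t2
    rw [hw] at t1 t2
    omega
  · rintro ((⟨h, _⟩ | ⟨h, _⟩) | ⟨h, _⟩) <;> exact h

private lemma aux_sum_split {X : Type} [Fintype X] [DecidableEq X] (G : SimpleGraph X)
    (hconn : G.Connected) (y z : X) (i : ℕ) (hi : 1 ≤ i) (hyz : G.dist y z = i)
    (f : ℕ → ℝ) :
    ∑ w ∈ univ.filter (fun w => G.dist y w = 1), f (G.dist z w) =
      ((univ.filter fun w => G.dist y w = 1 ∧ G.dist z w = i-1).card : ℝ) * f (i-1) +
      ((univ.filter fun w => G.dist y w = 1 ∧ G.dist z w = i).card : ℝ) * f i +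
      ((univ.filter fun w => G.dist y w = 1 ∧ G.dist z w = i+1).card : ℝ) * f (i+1) := by
  have hd1 : Disjoint (univ.filter fun w => G.dist y w = 1 ∧ G.dist z w = i-1)
      (univ.filter fun w => G.dist y w = 1 ∧ G.dist z w = i) := by
    rw [Finset.disjoint_left]
    intro w hw1 hw2
    simp only [mem_filter] at hw1 hw2
    omega
  have hd2 : Disjoint ((univ.filter fun w => G.dist y w = 1 ∧ G.dist z w = i-1) ∪
      (univ.filter fun w => G.dist y w = 1 ∧ G.dist z w = i))
      (univ.filter fun w => G.dist y w = 1 ∧ G.dist z w = i+1) := by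
    rw [Finset.disjoint_left]
    intro w hw1 hw2
    simp only [mem_union, mem_filter] at hw1 hw2
    omega
  have hconst : ∀ m : ℕ, ∑ w ∈ univ.filter (fun w => G.dist y w = 1 ∧ G.dist z w = m),
      f (G.dist z w) =
      ((univ.filter fun w => G.dist y w = 1 ∧ G.dist z w = m).card : ℝ) * f m := by
    intro m
    rw [Finset.sum_congr rfl (fun w hw => by rw [(mem_filter.mp hw).2.2]),
      Finset.sum_const, nsmul_eq_mul]
  rw [aux_split G hconn y z i hi hyz, Finset.sum_union hd2, Finset.sum_union hd1,
    hconst (i-1), hconst i, hconst (i+1)]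

theorem stmt_19 (X : Type) [Fintype X] [DecidableEq X]
    (G : SimpleGraph X) (hconn : G.Connected)
    (D : ℕ) (hD : 3 ≤ D)
    (hdiam : ∀ y z : X, G.dist y z ≤ D)
    (hdiam' : ∃ y z : X, G.dist y z = D)
    (p : ℕ → ℕ → ℕ → ℕ)
    (hp : ∀ h i j, h ≤ D → i ≤ D → j ≤ D → ∀ y z : X, G.dist y z = h →
      (Finset.univ.filter fun w => G.dist y w = i ∧ G.dist z w = j).card = p h i j)
    (A : ℕ → Matrix X X ℝ)
    (hA : ∀ i, A i = Matrix.of fun y z => if G.dist y z = i then (1 : ℝ) else 0)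
    (c a b : ℕ → ℝ)
    (hc : ∀ i ≤ D, c i = (p i 1 (i - 1) : ℝ))
    (ha : ∀ i ≤ D, a i = (p i 1 i : ℝ))
    (hb : ∀ i ≤ D, b i = (p i 1 (i + 1) : ℝ))
    (bp : ℤ) (hbp : bp ≠ 0) (α σ : ℝ)
    (gb : ℕ → ℝ) (hgb : ∀ i, gb i = ∑ l ∈ Finset.range i, (bp : ℝ) ^ l)
    (hclass_c : ∀ i ≤ D, c i = gb i * (1 + α * gb (i - 1)))
    (hclass_b : ∀ i ≤ D, b i = (gb D - gb i) * (σ - α * gb i))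
    (k θ : ℝ) (hk : k = b 0) (hθ : θ = b 1 / (bp : ℝ) - 1)
    (σs : ℕ → ℝ)
    (hσs : ∀ i, σs i = 1 + (θ / k - 1) * gb i * (bp : ℝ) ^ ((1 : ℤ) - (i : ℤ))) :
    σs 0 = 1 ∧ σs 1 = θ / k ∧
    (∀ i, 1 ≤ i → i ≤ D - 1 →
      c i * σs (i - 1) + a i * σs i + b i * σs (i + 1) = θ * σs i) ∧
    (c D * σs (D - 1) + a D * σs D = θ * σs D) ∧
    ∃ w : X → ℝ, w ≠ 0 ∧ (A 1).mulVec w = θ • w := by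
  obtain ⟨y0, z0, hy0z0⟩ := hdiam'
  set β := ((bp : ℝ)) with hβdef
  have hβ : β ≠ 0 := Int.cast_ne_zero.mpr hbp
  have hgb0 : gb 0 = 0 := by simp [hgb]
  have hgb1 : gb 1 = 1 := by simp [hgb]
  have hgbs : ∀ m, gb (m+1) = β * gb m + 1 := fun m => by
    rw [hgb, hgb]; exact geom_sum_succ
  have hpow : ∀ m, gb m * (β - 1) = β ^ m - 1 := fun m => by
    rw [hgb]; exact geom_sum_mul β m
  have hkc : k = gb D * σ := by
    rw [hk, hclass_b 0 (by omega), hgb0]; ring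
  have hb1c : b 1 = (gb D - 1) * (σ - α) := by
    rw [hclass_b 1 (by omega), hgb1]; ring
  have hθβ : θ * β = (gb D - 1) * (σ - α) - β := by
    rw [hθ, ← hb1c]; field_simp
  -- regularity
  have hk1 : ∀ v : X, ((univ.filter fun w => G.dist v w = 1).card : ℝ) = k := by
    intro v
    have h := hp 0 1 1 (by omega) (by omega) (by omega) v v SimpleGraph.dist_self
    simp only [and_self] at h
    rw [hk, hb 0 (by omega)]
    exact_mod_cast h
  have hkpos : (0:ℝ) < k := by
    obtain ⟨w1, hw1⟩ := aux_exists_dist G hconn hy0z0 1 (by omega)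
    have hmem : w1 ∈ univ.filter (fun w => G.dist y0 w = 1) := by simp [hw1]
    have hcard : 0 < (univ.filter fun w => G.dist y0 w = 1).card :=
      Finset.card_pos.mpr ⟨w1, hmem⟩
    rw [← hk1 y0]
    exact_mod_cast hcard
  have hk0 : k ≠ 0 := ne_of_gt hkpos
  set t := θ / k - 1 with htdef
  have hkt : k * t = θ - k := by rw [htdef]; field_simp
  have hσ0 : σs 0 = 1 := by rw [hσs 0, hgb0]; ring
  have hσ1 : σs 1 = θ / k := by
    rw [hσs 1, hgb1, show ((1:ℤ) - ((1:ℕ):ℤ)) = 0 by norm_num, zpow_zero, htdef]; ring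
  -- combinatorial identities for a
  have habk : ∀ i, 1 ≤ i → i + 1 ≤ D → a i = k - c i - b i := by
    intro i h1 h2
    obtain ⟨u, hu⟩ := aux_exists_dist G hconn hy0z0 i (by omega)
    have hsum := aux_sum_split G hconn y0 u i h1 hu (fun _ => (1:ℝ))
    simp only [Finset.sum_const, nsmul_eq_mul, mul_one] at hsum
    rw [hk1 y0] at hsum
    rw [hp i 1 (i-1) (by omega) (by omega) (by omega) y0 u hu] at hsum
    rw [hp i 1 i (by omega) (by omega) (by omega) y0 u hu] at hsum
    rw [hp i 1 (i+1) (by omega) (by omega) (by omega) y0 u hu] at hsum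
    rw [ha i (by omega), hc i (by omega), hb i (by omega)]
    linarith
  have hbD : b D = 0 := by rw [hclass_b D le_rfl]; ring
  have habD : a D = k - c D := by
    obtain ⟨u, hu⟩ := aux_exists_dist G hconn hy0z0 D le_rfl
    have hsum := aux_sum_split G hconn y0 u D (by omega) hu (fun _ => (1:ℝ))
    simp only [Finset.sum_const, nsmul_eq_mul, mul_one] at hsum
    rw [hk1 y0] at hsum
    rw [hp D 1 (D-1) (by omega) (by omega) (by omega) y0 u hu] at hsum
    rw [hp D 1 D (by omega) (by omega) (by omega) y0 u hu] at hsum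
    have hempty : (univ.filter fun w => G.dist y0 w = 1 ∧ G.dist u w = D+1) = ∅ := by
      rw [Finset.filter_eq_empty_iff]
      intro w _
      have := hdiam u w
      omega
    rw [hempty] at hsum
    simp only [Finset.card_empty, Nat.cast_zero, zero_mul, add_zero] at hsum
    rw [ha D le_rfl, hc D le_rfl]
    linarith
  -- the key algebraic recurrence
  have hrec : ∀ j, j + 1 ≤ D →
      c (j+1) * σs j + (k - c (j+1) - b (j+1)) * σs (j+1) + b (j+1) * σs (j+2)
        = θ * σs (j+1) := by
    intro j hj
    have hgi : gb (j+1) = β * gb j + 1 := hgbs j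
    have hgip : gb (j+1+1) = β * gb (j+1) + 1 := hgbs (j+1)
    have hK : b (j+1) = β * c (j+1) + (θ - k) * β * gb (j+1) + k * (β * β ^ j) := by
      rw [hclass_c (j+1) hj, hclass_b (j+1) hj, hkc]
      simp only [Nat.add_sub_cancel]
      rw [hgi]
      linear_combination (gb D * σ * β) * hpow j - (β * gb j + 1) * hθβ
    have e0 : σs (j+1) = 1 + t * gb (j+1) * β ^ (-(j:ℤ)) := by
      rw [hσs (j+1), show ((1:ℤ) - ((j+1:ℕ):ℤ)) = -(j:ℤ) by push_cast; ring]
    have em : σs j = 1 + t * gb j * (β * β ^ (-(j:ℤ))) := by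
      rw [hσs j, show β ^ ((1:ℤ) - (j:ℤ)) = β * β ^ (-(j:ℤ)) from by
        rw [sub_eq_add_neg, zpow_add₀ hβ, zpow_one]]
    have ep : σs (j+2) = 1 + t * gb (j+2) * β ^ (-(j:ℤ)-1) := by
      rw [hσs (j+2), show ((1:ℤ) - ((j+2:ℕ):ℤ)) = -(j:ℤ)-1 by push_cast; ring]
    have hq3 : β * β ^ (-(j:ℤ)-1) = β ^ (-(j:ℤ)) := by
      rw [show β * β ^ (-(j:ℤ)-1) = β ^ ((1:ℤ) + (-(j:ℤ)-1)) from by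
        rw [zpow_add₀ hβ, zpow_one], show (1:ℤ) + (-(j:ℤ)-1) = -(j:ℤ) from by ring]
    have hq4 : β ^ j * β ^ (-(j:ℤ)) = 1 := by
      rw [← zpow_natCast β j, ← zpow_add₀ hβ]
      simp
    rw [em, e0, show j+1+1 = j+2 from rfl] at *
    rw [ep]
    linear_combination (-(c (j+1) * t * β ^ (-(j:ℤ)))) * hgi
      + (b (j+1) * t * β ^ (-(j:ℤ)-1)) * hgip
      + (c (j+1) * t + (θ-k) * t * gb (j+1) + b (j+1) * t * gb (j+1) + k * t * β ^ j) * hq3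
      + (k * t) * hq4 + (t * β ^ (-(j:ℤ)-1)) * hK + hkt
  have part3 : ∀ i, 1 ≤ i → i ≤ D - 1 →
      c i * σs (i - 1) + a i * σs i + b i * σs (i + 1) = θ * σs i := by
    intro i h1 h2
    obtain ⟨j, rfl⟩ : ∃ j, i = j + 1 := ⟨i - 1, by omega⟩
    simp only [Nat.add_sub_cancel]
    rw [habk (j+1) (by omega) (by omega)]
    exact hrec j (by omega)
  have part4 : c D * σs (D - 1) + a D * σs D = θ * σs D := by
    have h := hrec (D-1) (by omega)
    have hD1 : D - 1 + 1 = D := by omega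
    rw [hD1] at h
    rw [hbD] at h
    rw [habD, hbD] at *
    linarith
  refine ⟨hσ0, hσ1, part3, part4, fun v => σs (G.dist y0 v), ?_, ?_⟩
  · intro hcontra
    have h := congrFun hcontra y0
    rw [SimpleGraph.dist_self] at h
    rw [hσ0] at h
    norm_num at h
  · funext v
    rw [hA 1]
    show ∑ u, (if G.dist v u = 1 then (1:ℝ) else 0) * σs (G.dist y0 u)
      = θ * σs (G.dist y0 v)
    have hstep : ∑ u, (if G.dist v u = 1 then (1:ℝ) else 0) * σs (G.dist y0 u)
        = ∑ u ∈ univ.filter (fun u => G.dist v u = 1), σs (G.dist y0 u) := by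
      rw [Finset.sum_filter]
      exact Finset.sum_congr rfl (fun u _ => by rw [ite_mul, one_mul, zero_mul])
    rw [hstep]
    rcases Nat.eq_zero_or_pos (G.dist y0 v) with h0 | hpos
    · have hv : y0 = v := (hconn.dist_eq_zero_iff).mp h0
      subst hv
      rw [h0, hσ0]
      calc ∑ u ∈ univ.filter (fun u => G.dist y0 u = 1), σs (G.dist y0 u)
          = ∑ u ∈ univ.filter (fun u => G.dist y0 u = 1), σs 1 :=
            Finset.sum_congr rfl (fun u hu => by rw [(mem_filter.mp hu).2])
        _ = ((univ.filter fun u => G.dist y0 u = 1).card : ℝ) * σs 1 := by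
            rw [Finset.sum_const, nsmul_eq_mul]
        _ = k * (θ / k) := by rw [hk1 y0, hσ1]
        _ = θ * 1 := by field_simp
    · set i := G.dist y0 v with hidef
      have hiD : i ≤ D := hidef ▸ hdiam y0 v
      have hvy0 : G.dist v y0 = i :=
        (SimpleGraph.dist_comm (u := v) (v := y0)).trans hidef.symm
      have hsum := aux_sum_split G hconn v y0 i hpos hvy0 σs
      rw [hsum]
      rcases Nat.lt_or_ge i D with hlt | hge
      · rw [hp i 1 (i-1) (by omega) (by omega) (by omega) v y0 hvy0]
        rw [hp i 1 i (by omega) (by omega) (by omega) v y0 hvy0]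
        rw [hp i 1 (i+1) (by omega) (by omega) (by omega) v y0 hvy0]
        rw [← hc i (by omega), ← ha i (by omega), ← hb i (by omega)]
        exact part3 i hpos (by omega)
      · have hiD' : i = D := by omega
        subst hiD'
        rw [hp i 1 (i-1) (by omega) (by omega) (by omega) v y0 hvy0]
        rw [hp i 1 i (by omega) (by omega) (by omega) v y0 hvy0]
        have hempty : (univ.filter fun w => G.dist v w = 1 ∧ G.dist y0 w = i+1) = ∅ := by
          rw [Finset.filter_eq_empty_iff]
          intro w _
          have := hdiam y0 w
          omega
        rw [hempty]
        rw [← hc i le_rfl, ← ha i le_rfl]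
        simp only [Finset.card_empty, Nat.cast_zero, zero_mul, add_zero]
        exact part4
end
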